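/- Let I ⊆ ℝ be an open interval, let γ : I → ℝ² be a C¹ curve parametrized by arc length with unit tangent τ(s) = γ'(s), and let n : I → ℝ² be a differentiable map of unit vectors with τ(s) = (−n₂(s), n₁(s)) and n'(s) = κ(s) τ(s) for a function κ : I → ℝ. Let v : ℝ² → ℝ² be C¹ with v(γ(s)) · n(s) = 0 for all s ∈ I, and let α : I → ℝ be any function. Then for each s ∈ I, the Navier boundary condition 2 (D(v)(γ(s)) n(s)) · τ(s) + α(s) (v(γ(s)) · τ(s)) = 0 holds if and only if ω(v)(γ(s)) = (2κ(s) − α(s)) (v(γ(s)) · τ(s)). -/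

import Mathlib

noncomputable section

/-- Dot product on `ℝ²` (realized as `Fin 2 → ℝ`). -/
def dot2 (u w : Fin 2 → ℝ) : ℝ := u 0 * w 0 + u 1 * w 1

/-- Vorticity `ω(v)(x) = ∂₁v²(x) − ∂₂v¹(x)` (components indexed `0,1`). -/
def vort (v : (Fin 2 → ℝ) → Fin 2 → ℝ) (x : Fin 2 → ℝ) : ℝ :=
  fderiv ℝ v x (Pi.single 0 1) 1 - fderiv ℝ v x (Pi.single 1 1) 0

/-- Rate-of-strain tensor `D(v)(x) = ½(Dv(x) + Dv(x)ᵀ)`, acting on a vector `u`. -/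
def strain (v : (Fin 2 → ℝ) → Fin 2 → ℝ) (x u : Fin 2 → ℝ) : Fin 2 → ℝ :=
  fun i => (1 / 2) * (fderiv ℝ v x u i + dot2 (fun j => fderiv ℝ v x (Pi.single i 1) j) u)

/-- Along a `C¹` arc-length curve `γ` in the open interval `(a,b)`, with unit normal `n`,
positively-oriented tangent `τ = (−n₂, n₁) = γ'` and `n' = κ τ`, for a `C¹` vector field `v`
tangent to the curve and any `α`, the Navier boundary condition
`2 (D(v) n) ⬝ τ + α (v ⬝ τ) = 0` holds at `γ(s)` iff `ω(v)(γ(s)) = (2κ(s) − α(s)) (v(γ(s)) ⬝ τ(s))`. -/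
theorem navier_iff_vorticity (a b : ℝ) (γ τ n : ℝ → Fin 2 → ℝ) (κ α : ℝ → ℝ)
    (v : (Fin 2 → ℝ) → Fin 2 → ℝ)
    (hγ : ∀ s ∈ Set.Ioo a b, HasDerivAt γ (τ s) s)
    (hτcont : ContinuousOn τ (Set.Ioo a b))
    (hτunit : ∀ s ∈ Set.Ioo a b, dot2 (τ s) (τ s) = 1)
    (hnunit : ∀ s ∈ Set.Ioo a b, dot2 (n s) (n s) = 1)
    (hτdef : ∀ s ∈ Set.Ioo a b, τ s = ![-(n s 1), n s 0])
    (hn' : ∀ s ∈ Set.Ioo a b, HasDerivAt n (κ s • τ s) s)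
    (hv : ContDiff ℝ 1 v)
    (htang : ∀ s ∈ Set.Ioo a b, dot2 (v (γ s)) (n s) = 0) :
    ∀ s ∈ Set.Ioo a b,
      (2 * dot2 (strain v (γ s) (n s)) (τ s) + α s * dot2 (v (γ s)) (τ s) = 0 ↔
        vort v (γ s) = (2 * κ s - α s) * dot2 (v (γ s)) (τ s)) := by
  intro s hs
  have hA : HasFDerivAt v (fderiv ℝ v (γ s)) (γ s) :=
    (hv.differentiable one_ne_zero (γ s)).hasFDerivAt
  set A := fderiv ℝ v (γ s) with hAdef
  have hcomp : HasDerivAt (fun t => v (γ t)) (A (τ s)) s :=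
    hA.comp_hasDerivAt s (hγ s hs)
  have hci : ∀ i, HasDerivAt (fun t => v (γ t) i) (A (τ s) i) s :=
    fun i => hasDerivAt_pi.mp hcomp i
  have hni : ∀ i, HasDerivAt (fun t => n t i) ((κ s • τ s) i) s :=
    fun i => hasDerivAt_pi.mp (hn' s hs) i
  have hf : HasDerivAt (fun t => dot2 (v (γ t)) (n t))
      (A (τ s) 0 * n s 0 + v (γ s) 0 * (κ s • τ s) 0 +
       (A (τ s) 1 * n s 1 + v (γ s) 1 * (κ s • τ s) 1)) s := by
    unfold dot2
    exact ((hci 0).mul (hni 0)).add ((hci 1).mul (hni 1))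
  have hzero : A (τ s) 0 * n s 0 + v (γ s) 0 * (κ s • τ s) 0 +
      (A (τ s) 1 * n s 1 + v (γ s) 1 * (κ s • τ s) 1) = 0 := by
    have hev : (fun _ : ℝ => (0:ℝ)) =ᶠ[nhds s] (fun t => dot2 (v (γ t)) (n t)) :=
      Filter.eventuallyEq_of_mem (isOpen_Ioo.mem_nhds hs) (fun t ht => (htang t ht).symm)
    have h0 := hf.congr_of_eventuallyEq hev
    exact (h0.unique (hasDerivAt_const s 0))
  have hAu : ∀ (u : Fin 2 → ℝ) (i : Fin 2),
      A u i = u 0 * A (Pi.single 0 1) i + u 1 * A (Pi.single 1 1) i := by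
    intro u i
    have hu : u = u 0 • (Pi.single 0 1 : Fin 2 → ℝ) + u 1 • (Pi.single 1 1 : Fin 2 → ℝ) := by
      funext j; fin_cases j <;> simp
    calc A u i = A (u 0 • (Pi.single 0 1 : Fin 2 → ℝ) + u 1 • (Pi.single 1 1 : Fin 2 → ℝ)) i := by
          rw [← hu]
      _ = u 0 * A (Pi.single 0 1) i + u 1 * A (Pi.single 1 1) i := by
          rw [map_add, map_smul, map_smul]; simp [smul_eq_mul]
  have hτ0 : τ s 0 = -(n s 1) := by rw [hτdef s hs]; rfl
  have hτ1 : τ s 1 = n s 0 := by rw [hτdef s hs]; rfl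
  have hunit : n s 0 * n s 0 + n s 1 * n s 1 = 1 := hnunit s hs
  rw [hAu (τ s) 0, hAu (τ s) 1] at hzero
  simp only [Pi.smul_apply, smul_eq_mul] at hzero
  rw [hτ0, hτ1] at hzero
  have main : 2 * dot2 (strain v (γ s) (n s)) (τ s) + α s * dot2 (v (γ s)) (τ s) =
      vort v (γ s) - (2 * κ s - α s) * dot2 (v (γ s)) (τ s) := by
    simp only [strain, dot2, vort]
    rw [hAu (n s) 0, hAu (n s) 1, hτ0, hτ1]
    linear_combination 2 * hzero + (A (Pi.single 0 1) 1 - A (Pi.single 1 1) 0) * hunit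
  constructor <;> intro h <;> linarith [main]

end
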